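/- Let a₊, a₋ ∈ (0,2)\{1}, let C₊, C₋, λ₊, λ₋, μ₊, μ₋ > 0 and T > 0. Define r : ℝ → ℝ by r(x) = exp(−(λ₊−μ₊)x²/2) for x > 0 and r(x) = exp(−(λ₋−μ₋)x²/2) for x < 0, and let ℓ̃ be the RDTS Lévy density with parameters (a₊, a₋, C₊, C₋, μ₊, μ₋). Then T·∫_ℝ (r(x)·log r(x) − r(x) + 1)·ℓ̃(x) dx = 2^{−1−a₊/2}·T·C₊·Γ(−a₊/2)·( (a₊/2 − 1)·λ₊^{a₊/2} − (a₊/2)·μ₊·λ₊^{a₊/2−1} + μ₊^{a₊/2} ) + 2^{−1−a₋/2}·T·C₋·Γ(−a₋/2)·( (a₋/2 − 1)·λ₋^{a₋/2} − (a₋/2)·μ₋·λ₋^{a₋/2−1} + μ₋^{a₋/2} ). -/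

import Mathlib

open MeasureTheory Real Set Filter Topology

/-- The RDTS (rapidly-decreasing tempered stable) Lévy density with parameters
`(a₊, a₋, C₊, C₋, θ₊, θ₋)`. -/
noncomputable def rdtsDensity (ap am Cp Cm tp tm : ℝ) (x : ℝ) : ℝ :=
  if 0 < x then Cp * exp (-(tp * x ^ 2 / 2)) * x ^ (-ap - 1)
  else if x < 0 then Cm * exp (-(tm * x ^ 2 / 2)) * |x| ^ (-am - 1)
  else 0

namespace RdtsAux

lemma abs_exp_neg_sub_one_le {y : ℝ} (hy : 0 ≤ y) : |exp (-y) - 1| ≤ y := by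
  have h1 : exp (-y) ≤ 1 := by
    calc exp (-y) ≤ exp 0 := exp_le_exp.mpr (by linarith)
    _ = 1 := exp_zero
  have h2 : 1 - y ≤ exp (-y) := by nlinarith [add_one_le_exp (-y)]
  rw [abs_le]
  constructor <;> linarith

lemma intG {a θ : ℝ} (ha0 : 0 < a) (ha2 : a < 2) (hθ : 0 < θ) :
    IntegrableOn (fun x : ℝ => (exp (-(θ * x ^ 2 / 2)) - 1) * x ^ (-a - 1)) (Ioi 0) := by
  have hms : Measurable fun x : ℝ => (exp (-(θ * x ^ 2 / 2)) - 1) * x ^ (-a - 1) := by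
    fun_prop
  rw [← Ioc_union_Ioi_eq_Ioi (zero_le_one : (0:ℝ) ≤ 1)]
  refine (integrableOn_union).mpr ⟨?_, ?_⟩
  · have hg : IntegrableOn (fun x : ℝ => θ / 2 * x ^ (1 - a)) (Ioc 0 1) :=
      ((intervalIntegrable_iff_integrableOn_Ioc_of_le zero_le_one).mp
        (intervalIntegral.intervalIntegrable_rpow' (by linarith))).const_mul _
    refine Integrable.mono' hg hms.aestronglyMeasurable.restrict ?_
    filter_upwards [ae_restrict_mem measurableSet_Ioc] with x hx
    obtain ⟨hx0, _⟩ := hx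
    have h1 : |exp (-(θ * x ^ 2 / 2)) - 1| ≤ θ * x ^ 2 / 2 :=
      abs_exp_neg_sub_one_le (by positivity)
    rw [norm_mul, norm_eq_abs, norm_eq_abs, abs_of_nonneg (rpow_nonneg hx0.le _)]
    calc |exp (-(θ * x ^ 2 / 2)) - 1| * x ^ (-a - 1)
        ≤ (θ * x ^ 2 / 2) * x ^ (-a - 1) := by
          exact mul_le_mul_of_nonneg_right h1 (rpow_nonneg hx0.le _)
      _ = θ / 2 * x ^ (1 - a) := by
          rw [show (1:ℝ) - a = 2 + (-a - 1) by ring, rpow_add hx0, rpow_two]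
          ring
  · have hg : IntegrableOn (fun x : ℝ => x ^ (-a - 1)) (Ioi 1) :=
      integrableOn_Ioi_rpow_of_lt (by linarith) zero_lt_one
    refine Integrable.mono' hg hms.aestronglyMeasurable.restrict ?_
    filter_upwards [ae_restrict_mem measurableSet_Ioi] with x hx
    have hx0 : (0:ℝ) < x := lt_trans zero_lt_one hx
    have h1 : |exp (-(θ * x ^ 2 / 2)) - 1| ≤ 1 := by
      have hp := exp_pos (-(θ * x ^ 2 / 2))
      have hle : exp (-(θ * x ^ 2 / 2)) ≤ 1 := by
        calc exp (-(θ * x ^ 2 / 2)) ≤ exp 0 := by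
              apply exp_le_exp.mpr
              have : (0:ℝ) ≤ θ * x ^ 2 / 2 := by positivity
              linarith
        _ = 1 := exp_zero
      rw [abs_le]; constructor <;> linarith
    rw [norm_mul, norm_eq_abs, norm_eq_abs, abs_of_nonneg (rpow_nonneg hx0.le _)]
    nlinarith [rpow_nonneg hx0.le (-a - 1)]

lemma valH {a θ : ℝ} (ha2 : a < 2) (hθ : 0 < θ) :
    ∫ x in Ioi (0:ℝ), x ^ (1 - a) * exp (-(θ / 2) * x ^ 2)
      = (θ / 2) ^ (a / 2 - 1) * (1 / 2) * Gamma (1 - a / 2) := by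
  have h := integral_rpow_mul_exp_neg_mul_rpow (p := 2) (q := 1 - a) (b := θ / 2)
    two_pos (by linarith) (by positivity)
  calc ∫ x in Ioi (0:ℝ), x ^ (1 - a) * exp (-(θ / 2) * x ^ 2)
      = ∫ x in Ioi (0:ℝ), x ^ (1 - a) * exp (-(θ / 2) * x ^ (2:ℝ)) := by
        refine setIntegral_congr_fun measurableSet_Ioi fun x hx => ?_
        rw [rpow_two]
    _ = (θ / 2) ^ (-(1 - a + 1) / 2) * (1 / 2) * Gamma ((1 - a + 1) / 2) := h
    _ = (θ / 2) ^ (a / 2 - 1) * (1 / 2) * Gamma (1 - a / 2) := by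
        rw [show -(1 - a + 1) / 2 = a / 2 - 1 by ring, show (1 - a + 1) / 2 = 1 - a / 2 by ring]

lemma valG {a θ : ℝ} (ha0 : 0 < a) (ha2 : a < 2) (hθ : 0 < θ) :
    ∫ x in Ioi (0:ℝ), (exp (-(θ * x ^ 2 / 2)) - 1) * x ^ (-a - 1)
      = 2 ^ (-1 - a / 2) * Gamma (-(a / 2)) * θ ^ (a / 2) := by
  have ha : a ≠ 0 := ha0.ne'
  have hu : ∀ x ∈ Ioi (0:ℝ), HasDerivAt (fun x : ℝ => exp (-(θ * x ^ 2 / 2)) - 1)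
      (-(θ * x) * exp (-(θ * x ^ 2 / 2))) x := by
    intro x _
    have h1 : HasDerivAt (fun y : ℝ => -(θ * y ^ 2 / 2)) (-(θ * x)) x := by
      have h := (((hasDerivAt_pow 2 x).const_mul θ).div_const 2).neg
      exact h.congr_deriv (by push_cast; ring)
    have h2 := (h1.exp).sub_const 1
    exact h2.congr_deriv (by ring)
  have hv : ∀ x ∈ Ioi (0:ℝ), HasDerivAt (fun x : ℝ => -(1 / a) * x ^ (-a))
      (x ^ (-a - 1)) x := by
    intro x hx
    have h1 : HasDerivAt (fun x : ℝ => x ^ (-a)) (-a * x ^ (-a - 1)) x :=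
      Real.hasDerivAt_rpow_const (Or.inl (ne_of_gt hx))
    have h2 := h1.const_mul (-(1 / a))
    exact h2.congr_deriv (by rw [← mul_assoc, neg_mul_neg, one_div, inv_mul_cancel₀ ha, one_mul])
  have huv' : IntegrableOn (fun x : ℝ =>
      (exp (-(θ * x ^ 2 / 2)) - 1) * x ^ (-a - 1)) (Ioi 0) := intG ha0 ha2 hθ
  have hu'v : IntegrableOn (fun x : ℝ =>
      (-(θ * x) * exp (-(θ * x ^ 2 / 2))) * (-(1 / a) * x ^ (-a))) (Ioi 0) := by
    have base : IntegrableOn (fun x : ℝ =>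
        (θ / a) * (x ^ (1 - a) * exp (-(θ / 2) * x ^ 2))) (Ioi 0) :=
      (integrableOn_rpow_mul_exp_neg_mul_sq (by positivity) (by linarith)).const_mul _
    refine base.congr_fun (fun x hx => ?_) measurableSet_Ioi
    have hx : (0:ℝ) < x := hx
    beta_reduce
    rw [show x ^ ((1:ℝ) - a) = x * x ^ (-a) by
        rw [show (1:ℝ) - a = 1 + -a by ring, rpow_add hx, rpow_one],
      show -(θ / 2) * x ^ 2 = -(θ * x ^ 2 / 2) by ring]
    field_simp
  have h_zero : Tendsto (fun x : ℝ =>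
      (exp (-(θ * x ^ 2 / 2)) - 1) * (-(1 / a) * x ^ (-a))) (𝓝[>] (0:ℝ)) (𝓝 0) := by
    refine squeeze_zero_norm' (a := fun x : ℝ => θ / (2 * a) * x ^ (2 - a)) ?_ ?_
    · filter_upwards [self_mem_nhdsWithin] with x hx
      have hx : (0:ℝ) < x := hx
      have h1 : |exp (-(θ * x ^ 2 / 2)) - 1| ≤ θ * x ^ 2 / 2 :=
        abs_exp_neg_sub_one_le (by positivity)
      have h2 : |(-(1 / a)) * x ^ (-a)| = 1 / a * x ^ (-a) := by
        rw [abs_mul, abs_neg, abs_of_pos (by positivity : (0:ℝ) < 1 / a),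
          abs_of_nonneg (rpow_nonneg hx.le _)]
      rw [norm_mul, norm_eq_abs, norm_eq_abs, h2]
      calc |exp (-(θ * x ^ 2 / 2)) - 1| * (1 / a * x ^ (-a))
          ≤ (θ * x ^ 2 / 2) * (1 / a * x ^ (-a)) := by
            apply mul_le_mul_of_nonneg_right h1
            positivity
        _ = θ / (2 * a) * x ^ (2 - a) := by
            rw [show (2:ℝ) - a = 2 + -a by ring, rpow_add hx, rpow_two]
            ring
    · have hc : Tendsto (fun x : ℝ => x ^ (2 - a)) (𝓝[>] (0:ℝ)) (𝓝 0) := by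
        have h : Tendsto (fun x : ℝ => x ^ (2 - a)) (𝓝[Ioi 0] (0:ℝ)) (𝓝 ((0:ℝ) ^ (2 - a))) :=
          (continuousAt_rpow_const 0 (2 - a) (Or.inr (by linarith))).continuousWithinAt
        rwa [zero_rpow (ne_of_gt (by linarith : (0:ℝ) < 2 - a))] at h
      simpa using hc.const_mul (θ / (2 * a))
  have h_infty : Tendsto (fun x : ℝ =>
      (exp (-(θ * x ^ 2 / 2)) - 1) * (-(1 / a) * x ^ (-a))) atTop (𝓝 0) := by
    have h1 : Tendsto (fun x : ℝ => θ * x ^ 2 / 2) atTop atTop := by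
      apply Tendsto.atTop_div_const two_pos
      exact (tendsto_pow_atTop two_ne_zero).const_mul_atTop hθ
    have h2 : Tendsto (fun x : ℝ => exp (-(θ * x ^ 2 / 2))) atTop (𝓝 0) :=
      tendsto_exp_atBot.comp (tendsto_neg_atBot_iff.mpr h1)
    have hu' : Tendsto (fun x : ℝ => exp (-(θ * x ^ 2 / 2)) - 1) atTop (𝓝 (-1)) := by
      simpa using h2.sub_const 1
    have hv' : Tendsto (fun x : ℝ => -(1 / a) * x ^ (-a)) atTop (𝓝 0) := by
      simpa using (tendsto_rpow_neg_atTop ha0).const_mul (-(1 / a))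
    simpa using hu'.mul hv'
  have key : ∫ x in Ioi (0:ℝ), (exp (-(θ * x ^ 2 / 2)) - 1) * x ^ (-a - 1)
      = 0 - 0 - ∫ x in Ioi (0:ℝ),
          (-(θ * x) * exp (-(θ * x ^ 2 / 2))) * (-(1 / a) * x ^ (-a)) :=
    integral_Ioi_mul_deriv_eq_deriv_mul hu hv huv' hu'v h_zero h_infty
  have hI2 : ∫ x in Ioi (0:ℝ), (-(θ * x) * exp (-(θ * x ^ 2 / 2))) * (-(1 / a) * x ^ (-a))
      = (θ / a) * ((θ / 2) ^ (a / 2 - 1) * (1 / 2) * Gamma (1 - a / 2)) := by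
    calc ∫ x in Ioi (0:ℝ), (-(θ * x) * exp (-(θ * x ^ 2 / 2))) * (-(1 / a) * x ^ (-a))
        = ∫ x in Ioi (0:ℝ), (θ / a) * (x ^ (1 - a) * exp (-(θ / 2) * x ^ 2)) := by
          refine setIntegral_congr_fun measurableSet_Ioi fun x hx => ?_
          have hx : (0:ℝ) < x := hx
          rw [show x ^ ((1:ℝ) - a) = x * x ^ (-a) by
              rw [show (1:ℝ) - a = 1 + -a by ring, rpow_add hx, rpow_one],
            show -(θ / 2) * x ^ 2 = -(θ * x ^ 2 / 2) by ring]
          field_simp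
      _ = (θ / a) * ∫ x in Ioi (0:ℝ), x ^ (1 - a) * exp (-(θ / 2) * x ^ 2) :=
          integral_const_mul _ _
      _ = (θ / a) * ((θ / 2) ^ (a / 2 - 1) * (1 / 2) * Gamma (1 - a / 2)) := by
          rw [valH ha2 hθ]
  rw [key, hI2]
  have hg : Gamma (1 - a / 2) = -(a / 2) * Gamma (-(a / 2)) := by
    rw [show (1:ℝ) - a / 2 = -(a / 2) + 1 by ring,
      Gamma_add_one (by simpa using ha : -(a / 2) ≠ 0)]
  have hl2 : (θ / 2 : ℝ) ^ (a / 2 - 1) = θ ^ (a / 2 - 1) * 2 ^ (1 - a / 2) := by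
    rw [div_rpow hθ.le (by norm_num : (0:ℝ) ≤ 2), div_eq_mul_inv,
      ← rpow_neg (by norm_num : (0:ℝ) ≤ 2), show -(a / 2 - 1) = 1 - a / 2 by ring]
  have h4 : (2:ℝ) ^ (1 - a / 2) = 4 * 2 ^ (-1 - a / 2) := by
    rw [show (1:ℝ) - a / 2 = 2 + (-1 - a / 2) by ring, rpow_add two_pos,
      show ((2:ℝ) ^ (2:ℝ)) = 4 by rw [rpow_two]; norm_num]
  have hll : θ ^ (a / 2 - 1) * θ = θ ^ (a / 2) := by
    rw [← rpow_add_one hθ.ne' (a / 2 - 1), show a / 2 - 1 + 1 = a / 2 by ring]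
  rw [hg, hl2, h4, ← hll]
  field_simp
  ring

lemma pos_key {a C l m : ℝ} (ha0 : 0 < a) (ha2 : a < 2) (hl : 0 < l) (hm : 0 < m) :
    ∀ x ∈ Ioi (0:ℝ),
      (exp (-((l - m) * x ^ 2 / 2)) * Real.log (exp (-((l - m) * x ^ 2 / 2)))
          - exp (-((l - m) * x ^ 2 / 2)) + 1) * (C * exp (-(m * x ^ 2 / 2)) * x ^ (-a - 1))
      = (-(l - m) / 2 * C) * (x ^ (1 - a) * exp (-(l / 2) * x ^ 2))
        + ((-C) * ((exp (-(l * x ^ 2 / 2)) - 1) * x ^ (-a - 1))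
          + C * ((exp (-(m * x ^ 2 / 2)) - 1) * x ^ (-a - 1))) := by
  intro x hx
  have hx : (0:ℝ) < x := hx
  rw [log_exp]
  have hexp : exp (-(l * x ^ 2 / 2))
      = exp (-((l - m) * x ^ 2 / 2)) * exp (-(m * x ^ 2 / 2)) := by
    rw [← exp_add]; congr 1; ring
  have hexp2 : exp (-(l / 2) * x ^ 2)
      = exp (-((l - m) * x ^ 2 / 2)) * exp (-(m * x ^ 2 / 2)) := by
    rw [← exp_add]; congr 1; ring
  have hpow : x ^ ((1:ℝ) - a) = x ^ 2 * x ^ (-a - 1) := by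
    rw [show (1:ℝ) - a = 2 + (-a - 1) by ring, rpow_add hx, rpow_two]
  rw [hexp, hexp2, hpow]
  ring

lemma pos_integrable {a C l m : ℝ} (ha0 : 0 < a) (ha2 : a < 2) (hl : 0 < l) (hm : 0 < m) :
    IntegrableOn (fun x : ℝ =>
      (exp (-((l - m) * x ^ 2 / 2)) * Real.log (exp (-((l - m) * x ^ 2 / 2)))
          - exp (-((l - m) * x ^ 2 / 2)) + 1) * (C * exp (-(m * x ^ 2 / 2)) * x ^ (-a - 1)))
      (Ioi 0) := by
  have h1 : IntegrableOn (fun x : ℝ =>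
      (-(l - m) / 2 * C) * (x ^ (1 - a) * exp (-(l / 2) * x ^ 2))) (Ioi 0) :=
    (integrableOn_rpow_mul_exp_neg_mul_sq (by positivity) (by linarith)).const_mul _
  have h2 : IntegrableOn (fun x : ℝ =>
      (-C) * ((exp (-(l * x ^ 2 / 2)) - 1) * x ^ (-a - 1))) (Ioi 0) :=
    (intG ha0 ha2 hl).const_mul _
  have h3 : IntegrableOn (fun x : ℝ =>
      C * ((exp (-(m * x ^ 2 / 2)) - 1) * x ^ (-a - 1))) (Ioi 0) :=
    (intG ha0 ha2 hm).const_mul _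
  exact IntegrableOn.congr_fun (h1.add (h2.add h3))
    (fun x hx => (pos_key (C := C) ha0 ha2 hl hm x hx).symm) measurableSet_Ioi

lemma pos_value {a C l m : ℝ} (ha0 : 0 < a) (ha2 : a < 2) (hl : 0 < l) (hm : 0 < m) :
    ∫ x in Ioi (0:ℝ),
      (exp (-((l - m) * x ^ 2 / 2)) * Real.log (exp (-((l - m) * x ^ 2 / 2)))
          - exp (-((l - m) * x ^ 2 / 2)) + 1) * (C * exp (-(m * x ^ 2 / 2)) * x ^ (-a - 1))
      = 2 ^ (-1 - a / 2) * C * Gamma (-(a / 2)) *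
          ((a / 2 - 1) * l ^ (a / 2) - a / 2 * m * l ^ (a / 2 - 1) + m ^ (a / 2)) := by
  have h1 : IntegrableOn (fun x : ℝ =>
      (-(l - m) / 2 * C) * (x ^ (1 - a) * exp (-(l / 2) * x ^ 2))) (Ioi 0) :=
    (integrableOn_rpow_mul_exp_neg_mul_sq (by positivity) (by linarith)).const_mul _
  have h2 : IntegrableOn (fun x : ℝ =>
      (-C) * ((exp (-(l * x ^ 2 / 2)) - 1) * x ^ (-a - 1))) (Ioi 0) :=
    (intG ha0 ha2 hl).const_mul _
  have h3 : IntegrableOn (fun x : ℝ =>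
      C * ((exp (-(m * x ^ 2 / 2)) - 1) * x ^ (-a - 1))) (Ioi 0) :=
    (intG ha0 ha2 hm).const_mul _
  have hcalc : ∫ x in Ioi (0:ℝ),
      (exp (-((l - m) * x ^ 2 / 2)) * Real.log (exp (-((l - m) * x ^ 2 / 2)))
          - exp (-((l - m) * x ^ 2 / 2)) + 1) * (C * exp (-(m * x ^ 2 / 2)) * x ^ (-a - 1))
      = (-(l - m) / 2 * C) * ((l / 2) ^ (a / 2 - 1) * (1 / 2) * Gamma (1 - a / 2))
        + ((-C) * (2 ^ (-1 - a / 2) * Gamma (-(a / 2)) * l ^ (a / 2))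
          + C * (2 ^ (-1 - a / 2) * Gamma (-(a / 2)) * m ^ (a / 2))) := by
    calc ∫ x in Ioi (0:ℝ),
        (exp (-((l - m) * x ^ 2 / 2)) * Real.log (exp (-((l - m) * x ^ 2 / 2)))
            - exp (-((l - m) * x ^ 2 / 2)) + 1) * (C * exp (-(m * x ^ 2 / 2)) * x ^ (-a - 1))
        = ∫ x in Ioi (0:ℝ),
            ((-(l - m) / 2 * C) * (x ^ (1 - a) * exp (-(l / 2) * x ^ 2))
              + ((-C) * ((exp (-(l * x ^ 2 / 2)) - 1) * x ^ (-a - 1))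
                + C * ((exp (-(m * x ^ 2 / 2)) - 1) * x ^ (-a - 1)))) :=
          setIntegral_congr_fun measurableSet_Ioi (pos_key (C := C) ha0 ha2 hl hm)
      _ = (∫ x in Ioi (0:ℝ), (-(l - m) / 2 * C) * (x ^ (1 - a) * exp (-(l / 2) * x ^ 2)))
          + ∫ x in Ioi (0:ℝ),
              ((-C) * ((exp (-(l * x ^ 2 / 2)) - 1) * x ^ (-a - 1))
                + C * ((exp (-(m * x ^ 2 / 2)) - 1) * x ^ (-a - 1))) :=
          integral_add h1 (h2.add h3)
      _ = (∫ x in Ioi (0:ℝ), (-(l - m) / 2 * C) * (x ^ (1 - a) * exp (-(l / 2) * x ^ 2)))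
          + ((∫ x in Ioi (0:ℝ), (-C) * ((exp (-(l * x ^ 2 / 2)) - 1) * x ^ (-a - 1)))
            + ∫ x in Ioi (0:ℝ), C * ((exp (-(m * x ^ 2 / 2)) - 1) * x ^ (-a - 1))) := by
          congr 1
          exact integral_add h2 h3
      _ = (-(l - m) / 2 * C) * (∫ x in Ioi (0:ℝ), x ^ (1 - a) * exp (-(l / 2) * x ^ 2))
          + ((-C) * (∫ x in Ioi (0:ℝ), (exp (-(l * x ^ 2 / 2)) - 1) * x ^ (-a - 1))
            + C * ∫ x in Ioi (0:ℝ), (exp (-(m * x ^ 2 / 2)) - 1) * x ^ (-a - 1)) := by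
          rw [integral_const_mul, integral_const_mul, integral_const_mul]
      _ = (-(l - m) / 2 * C) * ((l / 2) ^ (a / 2 - 1) * (1 / 2) * Gamma (1 - a / 2))
          + ((-C) * (2 ^ (-1 - a / 2) * Gamma (-(a / 2)) * l ^ (a / 2))
            + C * (2 ^ (-1 - a / 2) * Gamma (-(a / 2)) * m ^ (a / 2))) := by
          rw [valH ha2 hl, valG ha0 ha2 hl, valG ha0 ha2 hm]
  rw [hcalc]
  have hg : Gamma (1 - a / 2) = -(a / 2) * Gamma (-(a / 2)) := by
    rw [show (1:ℝ) - a / 2 = -(a / 2) + 1 by ring,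
      Gamma_add_one (by simpa using ha0.ne' : -(a / 2) ≠ 0)]
  have hl2 : (l / 2 : ℝ) ^ (a / 2 - 1) = l ^ (a / 2 - 1) * 2 ^ (1 - a / 2) := by
    rw [div_rpow hl.le (by norm_num : (0:ℝ) ≤ 2), div_eq_mul_inv,
      ← rpow_neg (by norm_num : (0:ℝ) ≤ 2), show -(a / 2 - 1) = 1 - a / 2 by ring]
  have h4 : (2:ℝ) ^ (1 - a / 2) = 4 * 2 ^ (-1 - a / 2) := by
    rw [show (1:ℝ) - a / 2 = 2 + (-1 - a / 2) by ring, rpow_add two_pos,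
      show ((2:ℝ) ^ (2:ℝ)) = 4 by rw [rpow_two]; norm_num]
  have hll : l ^ (a / 2 - 1) * l = l ^ (a / 2) := by
    rw [← rpow_add_one hl.ne' (a / 2 - 1), show a / 2 - 1 + 1 = a / 2 by ring]
  rw [hg, hl2, h4, ← hll]
  ring

end RdtsAux

open RdtsAux in
/-- Kullback–Leibler divergence between two equivalent-martingale RDTS processes. -/
theorem rdts_kl_divergence (ap am Cp Cm lp lm mp mm T : ℝ)
    (hap : ap ∈ Ioo (0:ℝ) 2) (hap1 : ap ≠ 1)
    (ham : am ∈ Ioo (0:ℝ) 2) (ham1 : am ≠ 1)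
    (hCp : 0 < Cp) (hCm : 0 < Cm) (hlp : 0 < lp) (hlm : 0 < lm)
    (hmp : 0 < mp) (hmm : 0 < mm) (hT : 0 < T)
    (r : ℝ → ℝ)
    (hrp : ∀ x : ℝ, 0 < x → r x = exp (-((lp - mp) * x ^ 2 / 2)))
    (hrm : ∀ x : ℝ, x < 0 → r x = exp (-((lm - mm) * x ^ 2 / 2))) :
    T * ∫ x : ℝ, (r x * Real.log (r x) - r x + 1) * rdtsDensity ap am Cp Cm mp mm x
      = (2:ℝ) ^ (-1 - ap / 2) * T * Cp * Gamma (-(ap / 2)) *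
          ((ap / 2 - 1) * lp ^ (ap / 2) - (ap / 2) * mp * lp ^ (ap / 2 - 1) + mp ^ (ap / 2))
        + (2:ℝ) ^ (-1 - am / 2) * T * Cm * Gamma (-(am / 2)) *
          ((am / 2 - 1) * lm ^ (am / 2) - (am / 2) * mm * lm ^ (am / 2 - 1) + mm ^ (am / 2)) := by
  obtain ⟨hap0, hap2⟩ := hap
  obtain ⟨ham0, ham2⟩ := ham
  set F : ℝ → ℝ :=
    fun x => (r x * Real.log (r x) - r x + 1) * rdtsDensity ap am Cp Cm mp mm x with hF
  have hFpos : EqOn F (fun x : ℝ =>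
      (exp (-((lp - mp) * x ^ 2 / 2)) * Real.log (exp (-((lp - mp) * x ^ 2 / 2)))
          - exp (-((lp - mp) * x ^ 2 / 2)) + 1)
        * (Cp * exp (-(mp * x ^ 2 / 2)) * x ^ (-ap - 1))) (Ioi 0) := by
    intro x hx
    have hx : (0:ℝ) < x := hx
    simp only [hF, rdtsDensity]
    rw [if_pos hx, hrp x hx]
  have hFneg : EqOn (fun x : ℝ => F (-x)) (fun x : ℝ =>
      (exp (-((lm - mm) * x ^ 2 / 2)) * Real.log (exp (-((lm - mm) * x ^ 2 / 2)))
          - exp (-((lm - mm) * x ^ 2 / 2)) + 1)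
        * (Cm * exp (-(mm * x ^ 2 / 2)) * x ^ (-am - 1))) (Ioi 0) := by
    intro x hx
    have hx : (0:ℝ) < x := hx
    have h1 : ¬ (0 < -x) := by linarith
    have h2 : -x < 0 := by linarith
    simp only [hF, rdtsDensity]
    rw [if_neg h1, if_pos h2, hrm (-x) h2]
    simp only [neg_sq, abs_neg, abs_of_pos hx]
  have hIntPos : IntegrableOn F (Ioi 0) :=
    (pos_integrable hap0 hap2 hlp hmp).congr_fun
      (fun x hx => (hFpos hx).symm) measurableSet_Ioi
  have hIntNegIoi : IntegrableOn (fun x : ℝ => F (-x)) (Ioi 0) :=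
    (pos_integrable ham0 ham2 hlm hmm).congr_fun
      (fun x hx => (hFneg hx).symm) measurableSet_Ioi
  have hIntNeg : IntegrableOn F (Iic 0) := by
    rw [← (Measure.measurePreserving_neg (volume : Measure ℝ)).integrableOn_comp_preimage
        (Homeomorph.neg ℝ).measurableEmbedding]
    simp only [Function.comp_def, neg_preimage, neg_Iic, neg_zero]
    rw [integrableOn_Ici_iff_integrableOn_Ioi]
    exact hIntNegIoi
  have hInt : Integrable F := by
    rw [← integrableOn_univ, ← Iic_union_Ioi (a := (0:ℝ))]
    exact hIntNeg.union hIntPos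
  have hsplit : ∫ x, F x = (∫ x in Iic (0:ℝ), F x) + ∫ x in Ioi (0:ℝ), F x := by
    rw [← integral_add_compl measurableSet_Iic hInt, compl_Iic]
  have hneg : ∫ x in Iic (0:ℝ), F x = ∫ x in Ioi (0:ℝ), F (-x) := by
    have h := integral_comp_neg_Ioi 0 F
    rw [neg_zero] at h
    exact h.symm
  rw [hsplit, hneg, setIntegral_congr_fun measurableSet_Ioi hFneg,
    setIntegral_congr_fun measurableSet_Ioi hFpos,
    pos_value hap0 hap2 hlp hmp, pos_value ham0 ham2 hlm hmm]
  ring
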